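/- Let M ≥ 2, K ≥ 2 and d ≥ 1, let U : 𝒦 → Matrix 𝒮 𝒮 ℂ be any family of unitary matrices and ω any density matrix on 𝒮. Then the M-partite private state γ := W · (Φ ⊗ ω) · Wᴴ is not biseparable; that is, every multipartite private state with key dimension K ≥ 2 is genuinely multipartite entangled. -/

import Mathlib

open Matrix Kronecker
open scoped ComplexOrder

open scoped Classical in
noncomputable def matSqrt {n : Type*} [Fintype n] [DecidableEq n] (A : Matrix n n ℂ) :
    Matrix n n ℂ :=
  if h : A.PosSemidef then
    (h.1.eigenvectorUnitary : Matrix n n ℂ) *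
      Matrix.diagonal ((↑) ∘ (fun x : ℝ => Real.sqrt x) ∘ h.1.eigenvalues) *
      (star h.1.eigenvectorUnitary : Matrix n n ℂ)
  else 0

noncomputable def rootFidelity {n : Type*} [Fintype n] [DecidableEq n]
    (ρ σ : Matrix n n ℂ) : ℝ :=
  (matSqrt (matSqrt σ * ρ * matSqrt σ)).trace.re

noncomputable def fidelity {n : Type*} [Fintype n] [DecidableEq n]
    (ρ σ : Matrix n n ℂ) : ℝ :=
  (rootFidelity ρ σ) ^ 2

noncomputable def traceNorm {n : Type*} [Fintype n] [DecidableEq n] (A : Matrix n n ℂ) : ℝ :=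
  (matSqrt (Aᴴ * A)).trace.re

/-- The set of attainable type-II error values in hypothesis testing. -/
def testValues {n : Type*} [Fintype n] [DecidableEq n] (ρ σ : Matrix n n ℂ) (ε : ℝ) :
    Set ℝ :=
  { x | ∃ Λ : Matrix n n ℂ, Λ.PosSemidef ∧ (1 - Λ).PosSemidef ∧
      1 - ε ≤ (Λ * ρ).trace.re ∧ x = (Λ * σ).trace.re }

/-- ε-hypothesis-testing relative entropy. -/
noncomputable def Dh {n : Type*} [Fintype n] [DecidableEq n]
    (ρ σ : Matrix n n ℂ) (ε : ℝ) : ℝ :=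
  - Real.logb 2 (sInf (testValues ρ σ ε))

/-- GHZ unit vector. -/
noncomputable def ghz (M K : ℕ) : (Fin M → Fin K) → ℂ :=
  fun f => if ∃ c, ∀ m, f m = c then ((Real.sqrt K : ℂ))⁻¹ else 0

/-- GHZ rank-one projection. -/
noncomputable def ghzProj (M K : ℕ) : Matrix (Fin M → Fin K) (Fin M → Fin K) ℂ :=
  Matrix.vecMulVec (ghz M K) (star ∘ ghz M K)

/-- The twisting unitary. -/
def twist (M K d : ℕ)
    (U : (Fin M → Fin K) → Matrix (Fin M → Fin d) (Fin M → Fin d) ℂ) :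
    Matrix ((Fin M → Fin K) × (Fin M → Fin d)) ((Fin M → Fin K) × (Fin M → Fin d)) ℂ :=
  Matrix.of fun p q => if p.1 = q.1 then U p.1 p.2 q.2 else 0

/-- The privacy test `Π = W (Φ ⊗ 1) Wᴴ`. -/
noncomputable def privacyTest (M K d : ℕ)
    (U : (Fin M → Fin K) → Matrix (Fin M → Fin d) (Fin M → Fin d) ℂ) :
    Matrix ((Fin M → Fin K) × (Fin M → Fin d)) ((Fin M → Fin K) × (Fin M → Fin d)) ℂ :=
  twist M K d U * (ghzProj M K ⊗ₖ (1 : Matrix (Fin M → Fin d) (Fin M → Fin d) ℂ)) *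
    (twist M K d U)ᴴ

/-- The private state `γ = W (Φ ⊗ ω) Wᴴ`. -/
noncomputable def privateState (M K d : ℕ)
    (U : (Fin M → Fin K) → Matrix (Fin M → Fin d) (Fin M → Fin d) ℂ)
    (ω : Matrix (Fin M → Fin d) (Fin M → Fin d) ℂ) :
    Matrix ((Fin M → Fin K) × (Fin M → Fin d)) ((Fin M → Fin K) × (Fin M → Fin d)) ℂ :=
  twist M K d U * (ghzProj M K ⊗ₖ ω) * (twist M K d U)ᴴ

/-- A vector on `𝒦 × 𝒮` is product across the bipartition `J | Jᶜ` of the parties. -/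
def IsProductAcross {M K d : ℕ} (J : Set (Fin M))
    (v : (Fin M → Fin K) × (Fin M → Fin d) → ℂ) : Prop :=
  ∃ (v₁ : ((↥J) → Fin K) × ((↥J) → Fin d) → ℂ)
    (v₂ : ((↥(Jᶜ)) → Fin K) × ((↥(Jᶜ)) → Fin d) → ℂ),
    ∀ (f : Fin M → Fin K) (x : Fin M → Fin d),
      v (f, x) = v₁ (fun m => f m.1, fun m => x m.1) * v₂ (fun m => f m.1, fun m => x m.1)

/-- Biseparability: a finite convex combination of pure states, each product across
some nontrivial bipartition of the parties. -/
def Biseparable {M K d : ℕ}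
    (σ : Matrix ((Fin M → Fin K) × (Fin M → Fin d))
      ((Fin M → Fin K) × (Fin M → Fin d)) ℂ) : Prop :=
  ∃ (N : ℕ) (p : Fin N → ℝ) (w : Fin N → ((Fin M → Fin K) × (Fin M → Fin d)) → ℂ)
    (J : Fin N → Set (Fin M)),
    (∀ t, 0 ≤ p t) ∧ (∑ t, p t = 1) ∧
    (∀ t, ∑ i, ‖w t i‖ ^ 2 = 1) ∧
    (∀ t, J t ≠ ∅ ∧ J t ≠ Set.univ ∧ IsProductAcross (J t) (w t)) ∧
    σ = ∑ t, (p t : ℂ) • Matrix.vecMulVec (w t) (star ∘ w t)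

/-- Partial trace over the second tensor factor. -/
noncomputable def partialTrace₂ {A B : Type*} [Fintype B] (τ : Matrix (A × B) (A × B) ℂ) :
    Matrix A A ℂ :=
  Matrix.of fun a a' => ∑ b, τ (a, b) (a', b)

/-- Matrix logarithm of a Hermitian matrix via the spectral functional calculus. -/
noncomputable def matLog {n : Type*} [Fintype n] [DecidableEq n] (A : Matrix n n ℂ) :
    Matrix n n ℂ :=
  if hA : A.IsHermitian then
    (hA.eigenvectorUnitary : Matrix n n ℂ) *
      Matrix.diagonal (fun i => (Real.log (hA.eigenvalues i) : ℂ)) *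
      (star hA.eigenvectorUnitary : Matrix n n ℂ)
  else 0

section Aux
variable {M K d : ℕ}

/-- reindex sums over constant functions -/
lemma sum_constants {α : Type*} [AddCommMonoid α] (hM : 0 < M)
    (A : (Fin M → Fin K) → α) :
    ∑ f, (if ∃ c, ∀ m, f m = c then A f else 0) = ∑ c : Fin K, A (fun _ => c) := by
  classical
  rw [← Finset.sum_filter]
  have h : Finset.univ.filter (fun f : Fin M → Fin K => ∃ c, ∀ m, f m = c)
      = Finset.univ.image (fun c : Fin K => (fun _ : Fin M => c)) := by
    ext f
    simp only [Finset.mem_filter, Finset.mem_univ, true_and, Finset.mem_image]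
    constructor
    · rintro ⟨c, hc⟩; exact ⟨c, (funext fun m => (hc m)).symm⟩
    · rintro ⟨c, rfl⟩; exact ⟨c, fun m => rfl⟩
  rw [h, Finset.sum_image]
  intro c _ c' _ h
  exact congrFun h ⟨0, hM⟩

lemma conj_ghz (f : Fin M → Fin K) : (starRingEnd ℂ) (ghz M K f) = ghz M K f := by
  unfold ghz
  split <;> simp

lemma star_dot_ghz (hM : 0 < M) (hK : 0 < K) :
    (star (ghz M K)) ⬝ᵥ (ghz M K) = 1 := by
  classical
  have : (star (ghz M K)) ⬝ᵥ (ghz M K)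
      = ∑ f : Fin M → Fin K, (if ∃ c, ∀ m, f m = c then ((Real.sqrt K : ℂ))⁻¹ * ((Real.sqrt K : ℂ))⁻¹ else 0) := by
    simp only [dotProduct]
    apply Finset.sum_congr rfl
    intro f _
    simp only [Pi.star_apply, ghz]
    split <;> simp
  rw [this, sum_constants hM, Finset.sum_const, Finset.card_univ, Fintype.card_fin]
  have hs : ((Real.sqrt K : ℂ))⁻¹ * ((Real.sqrt K : ℂ))⁻¹ = ((K : ℂ))⁻¹ := by
    rw [← mul_inv]
    norm_cast
    rw [Real.mul_self_sqrt (Nat.cast_nonneg K)]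
    push_cast
    ring
  rw [hs, nsmul_eq_mul]
  have : (K : ℂ) ≠ 0 := Nat.cast_ne_zero.mpr hK.ne'
  field_simp

lemma ghzProj_mul_ghzProj (hM : 0 < M) (hK : 0 < K) :
    ghzProj M K * ghzProj M K = ghzProj M K := by
  classical
  ext i j
  unfold ghzProj
  simp only [Matrix.mul_apply, Matrix.vecMulVec_apply, Function.comp_apply]
  have h2 : ∑ k, ghz M K i * star (ghz M K k) * (ghz M K k * star (ghz M K j))
      = (ghz M K i * star (ghz M K j)) * ((star (ghz M K)) ⬝ᵥ (ghz M K)) := by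
    rw [dotProduct, Finset.mul_sum]
    apply Finset.sum_congr rfl
    intro k _
    simp only [Pi.star_apply]
    ring
  rw [h2, star_dot_ghz hM hK, mul_one]

lemma trace_ghzProj (hM : 0 < M) (hK : 0 < K) : (ghzProj M K).trace = 1 := by
  classical
  have : (ghzProj M K).trace = (star (ghz M K)) ⬝ᵥ (ghz M K) := by
    unfold ghzProj Matrix.trace dotProduct
    apply Finset.sum_congr rfl
    intro f _
    simp [Matrix.vecMulVec_apply, mul_comm]
  rw [this, star_dot_ghz hM hK]

lemma twist_unitary
    (U : (Fin M → Fin K) → Matrix (Fin M → Fin d) (Fin M → Fin d) ℂ)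
    (hU : ∀ f, U f ∈ Matrix.unitaryGroup (Fin M → Fin d) ℂ) :
    (twist M K d U)ᴴ * twist M K d U = 1 := by
  classical
  ext ⟨f, x⟩ ⟨g, y⟩
  simp only [Matrix.mul_apply, Matrix.conjTranspose_apply, twist, Matrix.of_apply,
    Fintype.sum_prod_type]
  by_cases hfg : f = g
  · subst hfg
    have hUf : (U f)ᴴ * U f = 1 := by
      have := (Matrix.mem_unitaryGroup_iff').mp (hU f)
      simpa [Matrix.star_eq_conjTranspose] using this
    have h3 := congrFun (congrFun hUf x) y
    simp only [Matrix.mul_apply, Matrix.conjTranspose_apply, Matrix.one_apply] at h3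
    simp only [Matrix.one_apply, Prod.mk.injEq, true_and]
    calc ∑ h, ∑ z, star (if h = f then U h z x else 0) * (if h = f then U h z y else 0)
        = ∑ z, star (U f z x) * U f z y := by
          rw [Finset.sum_comm]
          apply Finset.sum_congr rfl
          intro z _
          simp
      _ = if x = y then 1 else 0 := h3
      _ = _ := by split <;> simp_all
  · simp only [Matrix.one_apply, Prod.mk.injEq, hfg, false_and, if_false]
    apply Finset.sum_eq_zero
    intro h _
    apply Finset.sum_eq_zero
    intro z _
    by_cases hf : h = f <;> by_cases hg : h = g <;> simp_all

end Aux

section Aux2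
variable {n : Type*} [Fintype n] [DecidableEq n]

lemma conj_vecMulVec (A : Matrix n n ℂ) (w : n → ℂ) :
    Aᴴ * Matrix.vecMulVec w (star w) * A
      = Matrix.vecMulVec (Aᴴ *ᵥ w) (star (Aᴴ *ᵥ w)) := by
  classical
  ext i j
  simp only [Matrix.mul_apply, Matrix.vecMulVec_apply, Matrix.conjTranspose_apply,
    Matrix.mulVec, dotProduct, Pi.star_apply, Finset.sum_mul, Finset.mul_sum]
  rw [Finset.sum_comm]
  apply Finset.sum_congr rfl
  intro k _
  rw [star_sum, Finset.mul_sum]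
  apply Finset.sum_congr rfl
  intro l _
  simp only [star_mul', star_star]
  ring

lemma trace_mul_vecMulVec (A : Matrix n n ℂ) (a b : n → ℂ) :
    (A * Matrix.vecMulVec a b).trace = ∑ i, ∑ j, b i * A i j * a j := by
  classical
  simp only [Matrix.trace, Matrix.diag, Matrix.mul_apply, Matrix.vecMulVec_apply]
  apply Finset.sum_congr rfl
  intro i _
  apply Finset.sum_congr rfl
  intro j _
  ring

end Aux2

section Aux3
variable {M K d : ℕ}

lemma trace_test_privateState (hM : 0 < M) (hK : 0 < K)
    (U : (Fin M → Fin K) → Matrix (Fin M → Fin d) (Fin M → Fin d) ℂ)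
    (hU : ∀ f, U f ∈ Matrix.unitaryGroup (Fin M → Fin d) ℂ)
    (ω : Matrix (Fin M → Fin d) (Fin M → Fin d) ℂ) (hωtr : ω.trace = 1) :
    (privacyTest M K d U * privateState M K d U ω).trace = 1 := by
  classical
  set W := twist M K d U with hWdef
  have hW : Wᴴ * W = 1 := twist_unitary U hU
  set A := ghzProj M K ⊗ₖ (1 : Matrix (Fin M → Fin d) (Fin M → Fin d) ℂ) with hAdef
  set B := ghzProj M K ⊗ₖ ω with hBdef
  have h1 : privacyTest M K d U * privateState M K d U ω
      = W * (A * ((Wᴴ * W) * (B * Wᴴ))) := by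
    simp [privacyTest, privateState, Matrix.mul_assoc]
    rfl
  rw [h1, hW, one_mul, Matrix.trace_mul_comm]
  have h2 : A * (B * Wᴴ) * W = (A * B) * (Wᴴ * W) := by
    simp [Matrix.mul_assoc]
  rw [h2, hW, mul_one, hAdef, hBdef, ← Matrix.mul_kronecker_mul,
    ghzProj_mul_ghzProj hM hK, one_mul, Matrix.trace_kronecker,
    trace_ghzProj hM hK, hωtr, mul_one]

end Aux3

section Aux4
variable {M K d : ℕ}

lemma star_ghz (f : Fin M → Fin K) : star (ghz M K f) = ghz M K f := conj_ghz f

lemma trace_test_pure (hM : 0 < M) (hK : 0 < K)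
    (U : (Fin M → Fin K) → Matrix (Fin M → Fin d) (Fin M → Fin d) ℂ)
    (w : (Fin M → Fin K) × (Fin M → Fin d) → ℂ) :
    (privacyTest M K d U * Matrix.vecMulVec w (star w)).trace
      = (K : ℂ)⁻¹ * ∑ x : Fin M → Fin d,
          star (∑ c : Fin K, ∑ y, star (U (fun _ => c) y x) * w (fun _ => c, y))
          * (∑ c : Fin K, ∑ y, star (U (fun _ => c) y x) * w (fun _ => c, y)) := by
  classical
  set W := twist M K d U with hWdef
  set A := ghzProj M K ⊗ₖ (1 : Matrix (Fin M → Fin d) (Fin M → Fin d) ℂ) with hAdef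
  set u := Wᴴ *ᵥ w with hudef
  have h1 : privacyTest M K d U * Matrix.vecMulVec w (star w)
      = W * (A * (Wᴴ * Matrix.vecMulVec w (star w))) := by
    simp [privacyTest, Matrix.mul_assoc]
    rfl
  rw [h1, Matrix.trace_mul_comm]
  have h2 : A * (Wᴴ * Matrix.vecMulVec w (star w)) * W
      = A * (Wᴴ * Matrix.vecMulVec w (star w) * W) := by
    simp [Matrix.mul_assoc]
  rw [h2, conj_vecMulVec, trace_mul_vecMulVec, ← hudef]
  have hu : ∀ f x, u (f, x) = ∑ y, star (U f y x) * w (f, y) := by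
    intro f x
    simp only [hudef, Matrix.mulVec, dotProduct, Fintype.sum_prod_type,
      Matrix.conjTranspose_apply, hWdef, twist, Matrix.of_apply,
      apply_ite (star : ℂ → ℂ), star_zero, ite_mul, zero_mul]
    rw [Finset.sum_comm]
    simp [Finset.sum_ite_eq']
  -- main sum computation
  set S : (Fin M → Fin d) → ℂ := fun x => ∑ g, star (ghz M K g) * u (g, x) with hSdef
  have key : ∑ i, ∑ j, (star u) i * A i j * u j = ∑ x, star (S x) * S x := by
    simp only [Fintype.sum_prod_type, hAdef, Matrix.kroneckerMap_apply, ghzProj,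
      Matrix.vecMulVec_apply, Function.comp_apply, Matrix.one_apply, Pi.star_apply,
      mul_ite, mul_one, mul_zero, ite_mul, zero_mul, Finset.sum_ite_eq,
      Finset.mem_univ, if_true]
    rw [Finset.sum_comm]
    apply Finset.sum_congr rfl
    intro x _
    rw [hSdef]
    rw [star_sum, Finset.sum_mul_sum]
    apply Finset.sum_congr rfl
    intro f _
    apply Finset.sum_congr rfl
    intro g _
    simp only [star_mul', star_star, star_ghz]
    ring
  rw [key]
  have hS : ∀ x, S x = ((Real.sqrt K : ℂ))⁻¹ * ∑ c : Fin K, u (fun _ => c, x) := by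
    intro x
    rw [hSdef]
    have : ∀ g : Fin M → Fin K, star (ghz M K g) * u (g, x)
        = if ∃ c, ∀ m, g m = c then ((Real.sqrt K : ℂ))⁻¹ * u (g, x) else 0 := by
      intro g
      rw [star_ghz]
      unfold ghz
      split <;> simp
    simp only [this]
    rw [sum_constants hM, Finset.mul_sum]
  have hsK : star ((Real.sqrt K : ℂ))⁻¹ * ((Real.sqrt K : ℂ))⁻¹ = (K : ℂ)⁻¹ := by
    rw [show star ((Real.sqrt K : ℂ))⁻¹ = ((Real.sqrt K : ℂ))⁻¹ by
      simp [Complex.star_def, ← Complex.ofReal_inv, Complex.conj_ofReal]]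
    rw [← mul_inv]
    norm_cast
    rw [Real.mul_self_sqrt (Nat.cast_nonneg K)]
    push_cast
    ring
  rw [Finset.mul_sum]
  apply Finset.sum_congr rfl
  intro x _
  rw [hS x]
  rw [show star (((Real.sqrt K : ℂ))⁻¹ * ∑ c : Fin K, u (fun _ => c, x))
      * (((Real.sqrt K : ℂ))⁻¹ * ∑ c : Fin K, u (fun _ => c, x))
      = (star ((Real.sqrt K : ℂ))⁻¹ * ((Real.sqrt K : ℂ))⁻¹)
        * (star (∑ c : Fin K, u (fun _ => c, x)) * (∑ c : Fin K, u (fun _ => c, x))) from by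
    rw [star_mul']; ring]
  rw [hsK]
  simp only [hu]

end Aux4

section Aux5

lemma unitary_normSq_sum {n : Type*} [Fintype n] [DecidableEq n]
    (V : Matrix n n ℂ) (hV : V * Vᴴ = 1) (a : n → ℂ) :
    ∑ x, Complex.normSq (∑ y, star (V y x) * a y) = ∑ y, Complex.normSq (a y) := by
  classical
  have hVe : ∀ y z : n, (∑ x, (starRingEnd ℂ) (V y x) * V z x) = if z = y then 1 else 0 := by
    intro y z
    have h := congrFun (congrFun hV z) y
    simp only [Matrix.mul_apply, Matrix.conjTranspose_apply, Matrix.one_apply,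
      Complex.star_def] at h
    rw [← h]
    exact Finset.sum_congr rfl fun x _ => mul_comm _ _
  have hC : (∑ x, (Complex.normSq (∑ y, (starRingEnd ℂ) (V y x) * a y) : ℂ))
      = ∑ y, (Complex.normSq (a y) : ℂ) := by
    have expand : ∀ x, (Complex.normSq (∑ y, (starRingEnd ℂ) (V y x) * a y) : ℂ)
        = ∑ y, ∑ z, (a y * (starRingEnd ℂ) (a z)) * ((starRingEnd ℂ) (V y x) * V z x) := by
      intro x
      rw [← Complex.mul_conj, map_sum, Finset.sum_mul_sum]
      apply Finset.sum_congr rfl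
      intro y _
      apply Finset.sum_congr rfl
      intro z _
      rw [_root_.map_mul, Complex.conj_conj]
      ring
    rw [Finset.sum_congr rfl fun x _ => expand x, Finset.sum_comm]
    calc ∑ y, ∑ x, ∑ z, (a y * (starRingEnd ℂ) (a z)) * ((starRingEnd ℂ) (V y x) * V z x)
        = ∑ y, ∑ z, (a y * (starRingEnd ℂ) (a z)) * ∑ x, ((starRingEnd ℂ) (V y x) * V z x) := by
          apply Finset.sum_congr rfl
          intro y _
          rw [Finset.sum_comm]
          apply Finset.sum_congr rfl
          intro z _
          rw [Finset.mul_sum]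
      _ = ∑ y, (Complex.normSq (a y) : ℂ) := by
          apply Finset.sum_congr rfl
          intro y _
          simp only [hVe, mul_ite, mul_one, mul_zero]
          rw [Finset.sum_ite_eq' Finset.univ y (fun z => a y * (starRingEnd ℂ) (a z))]
          simp [Complex.mul_conj]
  have hgoal : (∑ x, (Complex.normSq (∑ y, star (V y x) * a y) : ℂ))
      = ∑ y, (Complex.normSq (a y) : ℂ) := by
    simpa only [Complex.star_def] using hC
  exact_mod_cast hgoal

/-- triangle inequality step -/
lemma normSq_sum_le {n : Type*} [Fintype n] (K : ℕ) (b : Fin K → n → ℂ) :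
    ∑ x, Complex.normSq (∑ c, b c x)
      ≤ (∑ c, Real.sqrt (∑ x, Complex.normSq (b c x))) ^ 2 := by
  classical
  set B : Fin K → EuclideanSpace ℂ n := fun c => WithLp.toLp 2 (b c) with hB
  have hnorm : ∀ c, ‖B c‖ = Real.sqrt (∑ x, Complex.normSq (b c x)) := by
    intro c
    rw [EuclideanSpace.norm_eq]
    congr 1
    apply Finset.sum_congr rfl
    intro x _
    rw [PiLp.toLp_apply, Complex.sq_norm]
  have hsum : ‖∑ c, B c‖ ^ 2 = ∑ x, Complex.normSq (∑ c, b c x) := by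
    rw [EuclideanSpace.norm_eq, Real.sq_sqrt (by positivity)]
    apply Finset.sum_congr rfl
    intro x _
    rw [Complex.sq_norm]
    congr 1
    simp [hB]
  rw [← hsum]
  have h1 : ‖∑ c, B c‖ ≤ ∑ c, ‖B c‖ := norm_sum_le _ _
  have h2 : (0 : ℝ) ≤ ‖∑ c, B c‖ := norm_nonneg _
  calc ‖∑ c, B c‖ ^ 2 ≤ (∑ c, ‖B c‖) ^ 2 := by
        apply pow_le_pow_left₀ h2 h1
    _ = (∑ c, Real.sqrt (∑ x, Complex.normSq (b c x))) ^ 2 := by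
        congr 1
        exact Finset.sum_congr rfl fun c _ => hnorm c

end Aux5

section Aux6
variable {M K d : ℕ}

open scoped Classical in
noncomputable def splitEquiv (J : Set (Fin M)) (δ : Type*) :
    (Fin M → δ) ≃ ((↥J) → δ) × ((↥(Jᶜ)) → δ) where
  toFun y := (fun m => y m.1, fun m => y m.1)
  invFun p := fun m => if h : m ∈ J then p.1 ⟨m, h⟩ else p.2 ⟨m, h⟩
  left_inv y := by
    funext m
    by_cases h : m ∈ J <;> simp [h]
  right_inv p := by
    ext m
    · simp [m.2]
    · have hm : ¬ (m.1 ∈ J) := m.2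
      simp [hm]

open scoped Classical in
lemma sum_split {δ : Type*} [Fintype δ] (J : Set (Fin M))
    (F : ((↥J) → δ) → ℝ) (G : ((↥(Jᶜ)) → δ) → ℝ) :
    ∑ y : Fin M → δ, F (fun m => y m.1) * G (fun m => y m.1)
      = (∑ a, F a) * (∑ b, G b) := by
  calc ∑ y : Fin M → δ, F (fun m => y m.1) * G (fun m => y m.1)
      = ∑ p : ((↥J) → δ) × ((↥(Jᶜ)) → δ), F p.1 * G p.2 := by
        rw [← Equiv.sum_comp (splitEquiv J δ) (fun p => F p.1 * G p.2)]
        rfl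
    _ = (∑ a, F a) * (∑ b, G b) := by
        rw [Fintype.sum_prod_type, ← Finset.sum_mul_sum]

open scoped Classical in
lemma sum_comp_inj_le {γ : Type*} [Fintype γ] (g : γ → ℝ) (r : Fin K → γ)
    (hr : Function.Injective r) (hg : ∀ t, 0 ≤ g t) :
    ∑ c : Fin K, g (r c) ≤ ∑ t, g t := by
  rw [← Finset.sum_image (f := g) (g := r) (fun a _ b _ h => hr h)]
  exact Finset.sum_le_sum_of_subset_of_nonneg (Finset.subset_univ _) (fun t _ _ => hg t)

end Aux6

section Aux7
variable {M K d : ℕ}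

open scoped Classical in
lemma pure_state_bound
    (U : (Fin M → Fin K) → Matrix (Fin M → Fin d) (Fin M → Fin d) ℂ)
    (hU : ∀ f, U f ∈ Matrix.unitaryGroup (Fin M → Fin d) ℂ)
    (w : (Fin M → Fin K) × (Fin M → Fin d) → ℂ)
    (hnorm : ∑ i, ‖w i‖ ^ 2 = 1) (J : Set (Fin M))
    (hJne : J ≠ ∅) (hJuniv : J ≠ Set.univ) (hprod : IsProductAcross J w) :
    ∑ x : Fin M → Fin d, Complex.normSq
      (∑ c : Fin K, ∑ y, star (U (fun _ => c) y x) * w (fun _ => c, y)) ≤ 1 := by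
  obtain ⟨v₁, v₂, hv⟩ := hprod
  obtain ⟨j₀, hj₀⟩ : ∃ j, j ∈ J := by
    rcases Set.eq_empty_or_nonempty J with h | h
    · exact absurd h hJne
    · exact h
  obtain ⟨j₁, hj₁⟩ : ∃ j, j ∉ J := by
    by_contra h
    push_neg at h
    exact hJuniv (Set.eq_univ_of_forall h)
  set α : ((↥J) → Fin K) → ℝ := fun a => ∑ xa : (↥J) → Fin d, Complex.normSq (v₁ (a, xa))
    with hαdef
  set β : ((↥(Jᶜ)) → Fin K) → ℝ := fun b => ∑ xb : (↥(Jᶜ)) → Fin d, Complex.normSq (v₂ (b, xb))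
    with hβdef
  have hα : ∀ a, 0 ≤ α a := fun a => Finset.sum_nonneg fun _ _ => Complex.normSq_nonneg _
  have hβ : ∀ b, 0 ≤ β b := fun b => Finset.sum_nonneg fun _ _ => Complex.normSq_nonneg _
  -- pointwise product decomposition of normSq of w
  have hw : ∀ (f : Fin M → Fin K) (x : Fin M → Fin d),
      Complex.normSq (w (f, x))
        = Complex.normSq (v₁ (fun m => f m.1, fun m => x m.1))
          * Complex.normSq (v₂ (fun m => f m.1, fun m => x m.1)) := by
    intro f x
    rw [hv, Complex.normSq_mul]
  -- normalization
  have htot : (∑ a, α a) * (∑ b, β b) = 1 := by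
    have h1 : ∑ i : (Fin M → Fin K) × (Fin M → Fin d), Complex.normSq (w i) = 1 := by
      rw [← hnorm]
      apply Finset.sum_congr rfl
      intro i _
      rw [Complex.sq_norm]
    calc (∑ a, α a) * (∑ b, β b)
        = ∑ f : Fin M → Fin K, α (fun m => f m.1) * β (fun m => f m.1) :=
          (sum_split J α β).symm
      _ = ∑ f : Fin M → Fin K, ∑ x : Fin M → Fin d, Complex.normSq (w (f, x)) := by
          apply Finset.sum_congr rfl
          intro f _
          rw [hαdef, hβdef]
          rw [← sum_split J (fun xa => Complex.normSq (v₁ (fun m => f m.1, xa)))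
            (fun xb => Complex.normSq (v₂ (fun m => f m.1, xb)))]
          apply Finset.sum_congr rfl
          intro x _
          exact (hw f x).symm
      _ = 1 := by
          rw [← h1]
          exact (Fintype.sum_prod_type (fun p : (Fin M → Fin K) × (Fin M → Fin d) =>
            Complex.normSq (w p))).symm
  -- per-constant mass
  have hm : ∀ c : Fin K, (∑ y : Fin M → Fin d, Complex.normSq (w (fun _ => c, y)))
      = α (fun _ => c) * β (fun _ => c) := by
    intro c
    rw [hαdef, hβdef]
    rw [← sum_split J (fun xa => Complex.normSq (v₁ (fun _ => c, xa)))
      (fun xb => Complex.normSq (v₂ (fun _ => c, xb)))]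
    apply Finset.sum_congr rfl
    intro y _
    exact hw (fun _ => c) y
  -- the vectors b c
  set b : Fin K → (Fin M → Fin d) → ℂ :=
    fun c x => ∑ y, star (U (fun _ => c) y x) * w (fun _ => c, y) with hbdef
  have hb : ∀ c, ∑ x, Complex.normSq (b c x) = α (fun _ => c) * β (fun _ => c) := by
    intro c
    have hV : U (fun _ => c) * (U (fun _ => c))ᴴ = 1 := by
      have := Matrix.mem_unitaryGroup_iff.mp (hU (fun _ => c))
      rwa [Matrix.star_eq_conjTranspose] at this
    rw [hbdef]
    rw [unitary_normSq_sum (U (fun _ => c)) hV (fun y => w (fun _ => c, y))]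
    exact hm c
  calc ∑ x : Fin M → Fin d, Complex.normSq
        (∑ c : Fin K, ∑ y, star (U (fun _ => c) y x) * w (fun _ => c, y))
      = ∑ x, Complex.normSq (∑ c, b c x) := rfl
    _ ≤ (∑ c, Real.sqrt (∑ x, Complex.normSq (b c x))) ^ 2 := normSq_sum_le K b
    _ = (∑ c, Real.sqrt (α (fun _ => c) * β (fun _ => c))) ^ 2 := by
        congr 1
        apply Finset.sum_congr rfl
        intro c _
        rw [hb c]
    _ ≤ (∑ c, α (fun _ => c)) * (∑ c, β (fun _ => c)) := by
        apply Finset.sum_sq_le_sum_mul_sum_of_sq_eq_mul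
        · exact fun c _ => hα _
        · exact fun c _ => hβ _
        · exact fun c _ => Real.sq_sqrt (mul_nonneg (hα _) (hβ _))
    _ ≤ (∑ a, α a) * (∑ b, β b) := by
        apply mul_le_mul
        · apply sum_comp_inj_le α (fun c => (fun _ => c)) _ hα
          intro c c' h
          exact congrFun h ⟨j₀, hj₀⟩
        · apply sum_comp_inj_le β (fun c => (fun _ => c)) _ hβ
          intro c c' h
          exact congrFun h ⟨j₁, hj₁⟩
        · exact Finset.sum_nonneg fun c _ => hβ _
        · exact Finset.sum_nonneg fun a _ => hα _
    _ = 1 := htot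

end Aux7

/-- every multipartite private state with key dimension `K ≥ 2` is
genuinely multipartite entangled, i.e. not biseparable. -/
theorem stmt_13 (M K d : ℕ) (hM : 2 ≤ M) (hK : 2 ≤ K) (hd : 1 ≤ d)
    (U : (Fin M → Fin K) → Matrix (Fin M → Fin d) (Fin M → Fin d) ℂ)
    (hU : ∀ f, U f ∈ Matrix.unitaryGroup (Fin M → Fin d) ℂ)
    (ω : Matrix (Fin M → Fin d) (Fin M → Fin d) ℂ)
    (hω : ω.PosSemidef) (hωtr : ω.trace = 1) :
    ¬ Biseparable (privateState M K d U ω) := by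
  classical
  rintro ⟨N, p, w, J, hp, hpsum, hwnorm, hJ, hσ⟩
  have hM' : 0 < M := lt_of_lt_of_le two_pos hM
  have hK' : 0 < K := lt_of_lt_of_le two_pos hK
  -- the trace of the privacy test against the private state is 1
  have h1 : (privacyTest M K d U * privateState M K d U ω).trace = 1 :=
    trace_test_privateState hM' hK' U hU ω hωtr
  -- per-term values
  set T : Fin N → (Fin M → Fin d) → ℂ := fun t x =>
    ∑ c : Fin K, ∑ y, star (U (fun _ => c) y x) * w t (fun _ => c, y) with hTdef
  set s : Fin N → ℝ := fun t => ∑ x, Complex.normSq (T t x) with hsdef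
  have hs0 : ∀ t, 0 ≤ s t := fun t =>
    Finset.sum_nonneg fun _ _ => Complex.normSq_nonneg _
  have hs1 : ∀ t, s t ≤ 1 := by
    intro t
    obtain ⟨hne, huniv, hprod⟩ := hJ t
    exact pure_state_bound U hU (w t) (hwnorm t) (J t) hne huniv hprod
  have htr : ∀ t, (privacyTest M K d U * Matrix.vecMulVec (w t) (star ∘ w t)).trace
      = (K : ℂ)⁻¹ * ((s t : ℝ) : ℂ) := by
    intro t
    have hcomp : (star ∘ w t) = star (w t) := rfl
    rw [hcomp, trace_test_pure hM' hK' U (w t)]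
    congr 1
    rw [hsdef]
    push_cast
    apply Finset.sum_congr rfl
    intro x _
    rw [Complex.star_def, mul_comm, Complex.mul_conj]
    simp only [hTdef, Complex.star_def]
  -- expand the trace using linearity
  have h2 : (privacyTest M K d U * privateState M K d U ω).trace
      = ∑ t, (p t : ℂ) * ((K : ℂ)⁻¹ * ((s t : ℝ) : ℂ)) := by
    rw [hσ, Matrix.mul_sum, Matrix.trace_sum]
    apply Finset.sum_congr rfl
    intro t _
    rw [Matrix.mul_smul, Matrix.trace_smul, smul_eq_mul, htr t]
  rw [h2] at h1
  -- convert to a real statement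
  have h3 : ∑ t, p t * ((K : ℝ)⁻¹ * s t) = 1 := by
    have : ((∑ t, p t * ((K : ℝ)⁻¹ * s t) : ℝ) : ℂ)
        = ∑ t, (p t : ℂ) * ((K : ℂ)⁻¹ * ((s t : ℝ) : ℂ)) := by
      push_cast
      apply Finset.sum_congr rfl
      intro t _
      ring
    rw [← this] at h1
    exact_mod_cast h1
  -- but the sum is at most K⁻¹ < 1
  have h4 : ∑ t, p t * ((K : ℝ)⁻¹ * s t) ≤ (K : ℝ)⁻¹ := by
    calc ∑ t, p t * ((K : ℝ)⁻¹ * s t) ≤ ∑ t, p t * (K : ℝ)⁻¹ := by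
          apply Finset.sum_le_sum
          intro t _
          apply mul_le_mul_of_nonneg_left _ (hp t)
          calc (K : ℝ)⁻¹ * s t ≤ (K : ℝ)⁻¹ * 1 :=
                mul_le_mul_of_nonneg_left (hs1 t) (by positivity)
            _ = (K : ℝ)⁻¹ := mul_one _
      _ = (K : ℝ)⁻¹ := by rw [← Finset.sum_mul, hpsum, one_mul]
  have h5 : (K : ℝ)⁻¹ < 1 := by
    apply inv_lt_one_of_one_lt₀
    exact_mod_cast lt_of_lt_of_le one_lt_two hK
  rw [h3] at h4
  linarith
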